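/- Assume φ̄ ∈ C²([0,1];𝓗) solves the MEP problem and assumption (A) is satisfied. Then λ̄ ∈ C¹([0,1];ℝ) and (λ̄'(0), φ̄'(0)), (λ̄'(s̄), φ̄'(s̄)), (λ̄'(1), φ̄'(1)) are eigenpairs of the Hessians at the critical points, i.e. ∇²E(y_M^A)φ̄'(0) = λ̄'(0)·φ̄'(0), ∇²E(y_S)φ̄'(s̄) = λ̄'(s̄)·φ̄'(s̄), and ∇²E(y_M^B)φ̄'(1) = λ̄'(1)·φ̄'(1). -/

import Mathlib

noncomputable section

open Set
open scoped RealInnerProductSpace Topology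

variable {H : Type*} [NormedAddCommGroup H] [InnerProductSpace ℝ H] [CompleteSpace H]

/-- Orthogonal projection of `y` onto the span of `v` (`P_v y`). -/
def Pproj (v y : H) : H := ⟪y, ‖v‖⁻¹ • v⟫ • (‖v‖⁻¹ • v)

/-- Projection of `y` onto the orthogonal complement of `v` (`P_v^⊥ y`). -/
def Pperp (v y : H) : H := y - Pproj v y

/-- `f` is `C¹` on `[a,b]` with derivative `f'`. -/
def C1On {F : Type*} [NormedAddCommGroup F] [NormedSpace ℝ F] (a b : ℝ) (f f' : ℝ → F) : Prop :=
  (∀ α ∈ Icc a b, HasDerivWithinAt f (f' α) (Icc a b) α) ∧ ContinuousOn f' (Icc a b)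

/-- `f` is `C²` on `[a,b]`. -/
def C2On {F : Type*} [NormedAddCommGroup F] [NormedSpace ℝ F] (a b : ℝ) (f f' f'' : ℝ → F) : Prop :=
  C1On a b f f' ∧ C1On a b f' f''

/-- The length `L(φ)` of a curve with derivative `φ'`. -/
def len {F : Type*} [NormedAddCommGroup F] (φ' : ℝ → F) : ℝ := ∫ s in (0:ℝ)..1, ‖φ' s‖

/-- `Γ(φ)(α) = ∫₀^α |φ'| − α L(φ)`. -/
def Gam {F : Type*} [NormedAddCommGroup F] (φ' : ℝ → F) (α : ℝ) : ℝ :=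
  (∫ s in (0:ℝ)..α, ‖φ' s‖) - α * len φ'

/-- The admissible class `U` of regular curves joining `yA` to `yB`. -/
def InU (yA yB : H) (φ φ' : ℝ → H) : Prop :=
  C1On 0 1 φ φ' ∧ φ 0 = yA ∧ φ 1 = yB ∧ ∀ α ∈ Icc (0:ℝ) 1, φ' α ≠ 0

/-- The MEP equations. -/
def SolvesMEP (E : H → ℝ) (φ φ' : ℝ → H) : Prop :=
  (∀ α ∈ Icc (0:ℝ) 1, Pperp (φ' α) (gradient E (φ α)) = 0) ∧
  (∀ α ∈ Icc (0:ℝ) 1, Gam φ' α = 0)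

/-- Strong local minimizer. -/
def IsStrongMin (E : H → ℝ) (hess : H → H →L[ℝ] H) (y : H) : Prop :=
  gradient E y = 0 ∧ ∃ c > 0, ∀ u : H, c * ‖u‖ ^ 2 ≤ ⟪hess y u, u⟫

/-- Index-1 saddle point. -/
def IsIndex1Saddle (E : H → ℝ) (hess : H → H →L[ℝ] H) (y : H) : Prop :=
  gradient E y = 0 ∧
    ∃ v₁ : H, v₁ ≠ 0 ∧ (∃ l < (0:ℝ), hess y v₁ = l • v₁) ∧
      ∃ c > 0, ∀ u : H, ⟪u, v₁⟫ = 0 → c * ‖u‖ ^ 2 ≤ ⟪hess y u, u⟫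

/-- Assumption (A). -/
def AssumpA (E : H → ℝ) (hess : H → H →L[ℝ] H) (yA yB : H)
    (φb φb' φb'' : ℝ → H) (sbar : ℝ) : Prop :=
  C2On 0 1 φb φb' φb'' ∧ InU yA yB φb φb' ∧ SolvesMEP E φb φb' ∧
  sbar ∈ Ioo (0:ℝ) 1 ∧
  IsStrongMin E hess yA ∧ IsStrongMin E hess yB ∧
  IsIndex1Saddle E hess (φb sbar) ∧
  ∀ α ∈ Icc (0:ℝ) 1, gradient E (φb α) = 0 → α = 0 ∨ α = sbar ∨ α = 1

/-- `λ̄(α) = L(φ̄)⁻² (∇E(φ̄(α)), φ̄'(α))`. -/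
def lamBar (E : H → ℝ) (φ φ' : ℝ → H) (α : ℝ) : ℝ :=
  ((len φ') ^ 2)⁻¹ * ⟪gradient E (φ α), φ' α⟫

/-- The MEP operator `𝓕`. -/
def Fop (E : H → ℝ) (sbar σA σB : ℝ) (φ φ' : ℝ → H) (α : ℝ) : H :=
  Pperp (φ' α) (gradient E (φ α))
    - ((‖φ' α‖ - len φ') / len φ') • Pproj (φ' α) (gradient E (φ α))
    + (α * (α - 1) * ‖φ' α‖ / (sbar * (sbar - 1) * len φ')) •
        Pproj (φ' α) (gradient E (φ sbar))
    + ((σA + σB) * (Gam φ' α - α * (α - 1) / (sbar * (sbar - 1)) * Gam φ' sbar)) •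
        (‖φ' α‖⁻¹ • φ' α)

/-- Membership in the image space `Y`. -/
def MemY {F : Type*} [NormedAddCommGroup F] [NormedSpace ℝ F] (sbar : ℝ) (f : ℝ → F) : Prop :=
  ContinuousOn f (Icc (0:ℝ) 1) ∧ f 0 = 0 ∧ f 1 = 0 ∧
  DifferentiableWithinAt ℝ f (Icc (0:ℝ) 1) 0 ∧
  DifferentiableWithinAt ℝ f (Icc (0:ℝ) 1) sbar ∧
  DifferentiableWithinAt ℝ f (Icc (0:ℝ) 1) 1

/-- Membership in the space `X`. -/
def MemX {F : Type*} [NormedAddCommGroup F] [NormedSpace ℝ F] (ψ ψ' : ℝ → F) : Prop :=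
  C1On 0 1 ψ ψ' ∧ ψ 0 = 0 ∧ ψ 1 = 0

/-- The `C¹` (and `X`) norm. -/
def normC1 {F : Type*} [NormedAddCommGroup F] (ψ ψ' : ℝ → F) : ℝ :=
  (⨆ α : Icc (0:ℝ) 1, ‖ψ (α : ℝ)‖) + ⨆ α : Icc (0:ℝ) 1, ‖ψ' (α : ℝ)‖

/-- The weighted norm on `Y`. -/
def normY {F : Type*} [NormedAddCommGroup F] (sbar : ℝ) (f : ℝ → F) : ℝ :=
  (⨆ α : Ioo (0:ℝ) 1, ‖f (α : ℝ)‖ / |(α : ℝ) * ((α : ℝ) - 1)|) +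
    ⨆ α : ↥(Icc (0:ℝ) 1 \ {sbar}), ‖f (α : ℝ) - f sbar‖ / |(α : ℝ) - sbar|

/-- `∫₀¹ (φ̄'(s), ψ'(s))/|φ̄'(s)| ds`. -/
def gInt (φb' ψ' : ℝ → H) : ℝ := ∫ s in (0:ℝ)..1, ⟪φb' s, ψ' s⟫ / ‖φb' s‖

/-- `g_ψ(α)` (the linearisation `δΓ(φ̄)ψ`). -/
def gFun (φb' ψ' : ℝ → H) (α : ℝ) : ℝ :=
  (∫ s in (0:ℝ)..α, ⟪φb' s, ψ' s⟫ / ‖φb' s‖) - α * gInt φb' ψ'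

/-- `g_ψ'(α)`. -/
def gFun' (φb' ψ' : ℝ → H) (α : ℝ) : ℝ := ⟪φb' α, ψ' α⟫ / ‖φb' α‖ - gInt φb' ψ'

/-- The linearised MEP operator `T = δ𝓕(φ̄)`. -/
def Tlin (E : H → ℝ) (hess : H → H →L[ℝ] H) (φb φb' : ℝ → H)
    (sbar σA σB : ℝ) (ψ ψ' : ℝ → H) (α : ℝ) : H :=
  Pperp (φb' α) (hess (φb α) (ψ α) - lamBar E φb φb' α • ψ' α)
    + (α * (α - 1) / (sbar * (sbar - 1))) • Pproj (φb' α) (hess (φb sbar) (ψ sbar))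
    + ((σA + σB) * (gFun φb' ψ' α - α * (α - 1) / (sbar * (sbar - 1)) * gFun φb' ψ' sbar)
        - lamBar E φb φb' α * gFun' φb' ψ' α) • (‖φb' α‖⁻¹ • φb' α)

/-- Assumption (B). -/
def AssumpB (hess : H → H →L[ℝ] H) (yA yB vA vB : H) (σA σB : ℝ) : Prop :=
  hess yA vA = σA • vA ∧ hess yB vB = σB • vB ∧
  (∀ μ ∈ spectrum ℝ (hess yA), σA ≤ μ) ∧
  (∀ μ ∈ spectrum ℝ (hess yB), σB ≤ μ) ∧
  (∃ ε > 0, ∀ μ ∈ spectrum ℝ (hess yA), μ ≠ σA → σA + ε ≤ μ) ∧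
  (∃ ε > 0, ∀ μ ∈ spectrum ℝ (hess yB), μ ≠ σB → σB + ε ≤ μ) ∧
  (∀ u : H, hess yA u = σA • u → ∃ c : ℝ, u = c • vA) ∧
  (∀ u : H, hess yB u = σB • u → ∃ c : ℝ, u = c • vB)

/-- `P_v` as a continuous linear map. -/
def projL (v : H) : H →L[ℝ] H := (innerSL ℝ (‖v‖⁻¹ • v)).smulRight (‖v‖⁻¹ • v)

/-- `P_v^⊥` as a continuous linear map. -/
def projPerpL (v : H) : H →L[ℝ] H := ContinuousLinearMap.id ℝ H - projL v

/-- `B(α) = P⊥ ∇²E(φ̄(α)) P⊥`. -/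
def Bop (hess : H → H →L[ℝ] H) (φb φb' : ℝ → H) (α : ℝ) : H →L[ℝ] H :=
  (projPerpL (φb' α)).comp ((hess (φb α)).comp (projPerpL (φb' α)))

/-- `D(α) y = −(y,t'(α))t(α) − (y,t(α))t'(α)`. -/
def Dop (t t' : ℝ → H) (α : ℝ) : H →L[ℝ] H :=
  -((innerSL ℝ (t' α)).smulRight (t α)) - (innerSL ℝ (t α)).smulRight (t' α)

/-- The operator `A(α)`. -/
def Aop {K : Type*} [NormedAddCommGroup K] [InnerProductSpace ℝ K] [CompleteSpace K]
    (E : H → ℝ) (hess : H → H →L[ℝ] H) (φb φb' t' : ℝ → H)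
    (Q Q' : ℝ → K →L[ℝ] H) (α : ℝ) : K →L[ℝ] K :=
  (ContinuousLinearMap.adjoint (Q α)).comp ((Bop hess φb φb' α).comp (Q α))
    - lamBar E φb φb' α •
        ((ContinuousLinearMap.adjoint (Q α)).comp
            ((Dop (fun s => ‖φb' s‖⁻¹ • φb' s) t' α).comp (Q α))
          - (ContinuousLinearMap.adjoint (Q α)).comp (Q' α))

/-- `ω_S`. -/
def omegaS (hess : H → H →L[ℝ] H) (yS : H) : ℝ :=
  sInf {l : ℝ | l ∈ spectrum ℝ (hess yS) ∧ 0 < l}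

/-- `ω_B`. -/
def omegaB (hess : H → H →L[ℝ] H) (yB : H) (σB : ℝ) : ℝ :=
  sInf {l : ℝ | l ∈ spectrum ℝ (hess yB) ∧ l ≠ σB}

/-- The tube `𝒰_ε` around the path. -/
def Utube (φb : ℝ → H) (ε : ℝ) : Set H := {y : H | ∃ α ∈ Icc (0:ℝ) 1, ‖y - φb α‖ ≤ ε}

/-- Restriction of a second derivative to a subspace. -/
def restrict2 (K : Submodule ℝ H) (T : H →L[ℝ] H →L[ℝ] ℝ) : K →L[ℝ] K →L[ℝ] ℝ :=
  (((ContinuousLinearMap.compL ℝ K H ℝ).flip K.subtypeL)).comp (T.comp K.subtypeL)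

/-- `C⁰` distance between `E'` (on the subspace `K`) and `E`, over `S`. -/
def subC0dist (K : Submodule ℝ H) (E : H → ℝ) (E' : K → ℝ) (S : Set K) : ℝ :=
  ⨆ y : S, |E' y.1 - E (y.1 : H)|

/-- `C¹` distance between `E'` (on the subspace `K`) and `E`, over `S`. -/
def subC1dist (K : Submodule ℝ H) (E : H → ℝ) (E' : K → ℝ) (S : Set K) : ℝ :=
  subC0dist K E E' S +
    ⨆ y : S, ‖fderiv ℝ E' y.1 - (fderiv ℝ E (y.1 : H)).comp K.subtypeL‖

/-- `C²` distance between `E'` (on the subspace `K`) and `E`, over `S`. -/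
def subC2dist (K : Submodule ℝ H) (E : H → ℝ) (E' : K → ℝ) (S : Set K) : ℝ :=
  subC1dist K E E' S +
    ⨆ y : S, @norm (K →L[ℝ] K →L[ℝ] ℝ)
        (@ContinuousLinearMap.hasOpNorm ℝ ℝ K (K →L[ℝ] ℝ) _ _ _ _ _ _ _)
        (fderiv ℝ (fun z => fderiv ℝ E' z) y.1
        - restrict2 K (fderiv ℝ (fun z => fderiv ℝ E z) (y.1 : H)))

theorem stmt6
    (E : H → ℝ) (hE : ContDiff ℝ 3 E)
    (hess : H → H →L[ℝ] H) (hhess : ∀ y : H, HasFDerivAt (gradient E) (hess y) y)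
    (yA yB : H) (φb φb' φb'' : ℝ → H) (sbar : ℝ)
    (hA : AssumpA E hess yA yB φb φb' φb'' sbar) :
    ∃ lam' : ℝ → ℝ,
      (∀ α ∈ Icc (0:ℝ) 1, HasDerivWithinAt (lamBar E φb φb') (lam' α) (Icc (0:ℝ) 1) α) ∧
      ContinuousOn lam' (Icc (0:ℝ) 1) ∧
      hess yA (φb' 0) = lam' 0 • φb' 0 ∧
      hess (φb sbar) (φb' sbar) = lam' sbar • φb' sbar ∧
      hess yB (φb' 1) = lam' 1 • φb' 1 := by
  classical
  obtain ⟨⟨⟨hφd, hφ'cont⟩, ⟨hφ'd, hφ''cont⟩⟩, hU, ⟨hperp, hgam⟩, hsbar, hminA, hminB, hsaddle, -⟩ := hA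
  obtain ⟨-, hφ0, hφ1, hne⟩ := hU
  have h01 : (0:ℝ) ∈ Icc (0:ℝ) 1 := left_mem_Icc.2 zero_le_one
  have h11 : (1:ℝ) ∈ Icc (0:ℝ) 1 := right_mem_Icc.2 zero_le_one
  have hs1 : sbar ∈ Icc (0:ℝ) 1 := ⟨hsbar.1.le, hsbar.2.le⟩
  have hφcont : ContinuousOn φb (Icc 0 1) := fun α hα => (hφd α hα).continuousWithinAt
  have hnc : ContinuousOn (fun s => ‖φb' s‖) (Icc 0 1) := hφ'cont.norm
  -- FTC within the closed interval
  have ftc : ∀ b ∈ Icc (0:ℝ) 1,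
      HasDerivWithinAt (fun u => ∫ x in (0:ℝ)..u, ‖φb' x‖) (‖φb' b‖) (Icc 0 1) b := by
    intro b hb
    have hint : IntervalIntegrable (fun s => ‖φb' s‖) MeasureTheory.volume 0 b := by
      apply ContinuousOn.intervalIntegrable
      apply hnc.mono
      rw [uIcc_of_le hb.1]
      exact Icc_subset_Icc le_rfl hb.2
    haveI : Fact (b ∈ Icc (0:ℝ) 1) := ⟨hb⟩
    exact intervalIntegral.integral_hasDerivWithinAt_right hint
      (hnc.stronglyMeasurableAtFilter_nhdsWithin measurableSet_Icc b) (hnc b hb)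
  -- the speed is constant, equal to the length
  set L := len φb' with hLdef
  have hLα : ∀ α ∈ Icc (0:ℝ) 1, ‖φb' α‖ = L := by
    intro α hα
    have hud : UniqueDiffWithinAt ℝ (Icc (0:ℝ) 1) α := uniqueDiffOn_Icc one_pos α hα
    have h1 : HasDerivWithinAt (fun u => ∫ x in (0:ℝ)..u, ‖φb' x‖) L (Icc 0 1) α := by
      have hlin : HasDerivWithinAt (fun u : ℝ => u * L) L (Icc (0:ℝ) 1) α := by
        simpa using (hasDerivWithinAt_id α (Icc (0:ℝ) 1)).mul_const L
      refine hlin.congr (fun y hy => ?_) ?_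
      · have h := hgam y hy
        rw [Gam, sub_eq_zero] at h
        exact h
      · have h := hgam α hα
        rw [Gam, sub_eq_zero] at h
        exact h
    exact ((ftc α hα).derivWithin hud).symm.trans (h1.derivWithin hud)
  -- gradient is parallel to the tangent
  have hgrad_eq : ∀ α ∈ Icc (0:ℝ) 1,
      gradient E (φb α) = lamBar E φb φb' α • φb' α := by
    intro α hα
    have hL0 : L ≠ 0 := by
      intro h
      exact hne α hα (by simpa [h] using hLα α hα)
    have hp := hperp α hα
    rw [Pperp, sub_eq_zero] at hp
    rw [hp, Pproj, lamBar, hLα α hα, real_inner_smul_right, smul_smul]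
    congr 1
    rw [sq, mul_inv]
    ring
  -- derivative of the gradient along the path
  have hgd : ∀ α ∈ Icc (0:ℝ) 1,
      HasDerivWithinAt (fun s => gradient E (φb s)) (hess (φb α) (φb' α)) (Icc 0 1) α :=
    fun α hα => (hhess (φb α)).comp_hasDerivWithinAt α (hφd α hα)
  -- the candidate derivative of λ̄
  set lam' : ℝ → ℝ := fun α => ((L : ℝ) ^ 2)⁻¹ *
      (⟪gradient E (φb α), φb'' α⟫ + ⟪hess (φb α) (φb' α), φb' α⟫) with hlam'def
  have hlamd : ∀ α ∈ Icc (0:ℝ) 1,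
      HasDerivWithinAt (lamBar E φb φb') (lam' α) (Icc (0:ℝ) 1) α := by
    intro α hα
    have h := ((hgd α hα).inner ℝ (hφ'd α hα)).const_mul (((L : ℝ) ^ 2)⁻¹)
    exact h
  -- eigenvalue identity at critical points
  have key : ∀ α₀ ∈ Icc (0:ℝ) 1, gradient E (φb α₀) = 0 →
      hess (φb α₀) (φb' α₀) = lam' α₀ • φb' α₀ := by
    intro α₀ hα₀ hg0
    have hud : UniqueDiffWithinAt ℝ (Icc (0:ℝ) 1) α₀ := uniqueDiffOn_Icc one_pos α₀ hα₀
    have hlam0 : lamBar E φb φb' α₀ = 0 := by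
      simp [lamBar, hg0]
    have h1 : HasDerivWithinAt (fun s => lamBar E φb φb' s • φb' s)
        (lam' α₀ • φb' α₀) (Icc (0:ℝ) 1) α₀ := by
      have h := (hlamd α₀ hα₀).smul (hφ'd α₀ hα₀)
      simp only [hlam0, zero_smul, zero_add, add_zero] at h
      exact h
    have h2 : HasDerivWithinAt (fun s => gradient E (φb s))
        (lam' α₀ • φb' α₀) (Icc (0:ℝ) 1) α₀ :=
      h1.congr (fun y hy => hgrad_eq y hy) (hgrad_eq α₀ hα₀)
    exact ((hgd α₀ hα₀).derivWithin hud).symm.trans (h2.derivWithin hud)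
  refine ⟨lam', hlamd, ?_, ?_, ?_, ?_⟩
  · -- continuity of lam'
    have hgradC2 : ContDiff ℝ 2 (gradient E) := by
      have h1 : ContDiff ℝ 2 (fderiv ℝ E) := hE.fderiv_right (by norm_num)
      exact ((InnerProductSpace.toDual ℝ H).symm.contDiff).comp h1
    have hhessC : Continuous hess := by
      have heq : hess = fun y => fderiv ℝ (gradient E) y :=
        funext fun y => ((hhess y).fderiv).symm
      rw [heq]
      exact (hgradC2.fderiv_right (m := 1) (by norm_num)).continuous
    have hgcont : ContinuousOn (fun α => gradient E (φb α)) (Icc 0 1) :=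
      hgradC2.continuous.comp_continuousOn hφcont
    have hhesscont : ContinuousOn (fun α => hess (φb α) (φb' α)) (Icc 0 1) :=
      (hhessC.comp_continuousOn hφcont).clm_apply hφ'cont
    exact continuousOn_const.mul ((hgcont.inner hφ''cont).add (hhesscont.inner hφ'cont))
  · have h := key 0 h01 (by rw [hφ0]; exact hminA.1)
    rwa [hφ0] at h
  · exact key sbar hs1 hsaddle.1
  · have h := key 1 h11 (by rw [hφ1]; exact hminB.1)
    rwa [hφ1] at h
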